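/- Let m, k, n, τ be integers with 0 ≤ τ ≤ m ≤ k ≤ n. Then C(n−m, k−τ) · (n+1−m)^{m−τ} · C(n+1−m, k−m) ≤ C(n+1−m, k−τ) · (n−m)^{m−τ} · C(n−m, k−m). Consequently, g(m,n,k) ≤ g(m,n+1,k), i.e., g(m,n,k) is monotone non-decreasing in n for fixed m ≤ k. -/

import Mathlib

open Finset

lemma key_nat (a s j : ℕ) :
    a.choose (s + j) * (a + 1) ^ j * (a + 1).choose s ≤
    (a + 1).choose (s + j) * a ^ j * a.choose s := by
  induction j with
  | zero => simp [Nat.mul_comm]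
  | succ j ih =>
    by_cases h : s + j + 1 ≤ a
    · apply Nat.le_of_mul_le_mul_right _ (Nat.succ_pos (s + j))
      have h1 : a.choose (s + j + 1) * (s + j + 1) = a.choose (s + j) * (a - (s + j)) :=
        Nat.choose_succ_right_eq a (s + j)
      have h2 : (a + 1).choose (s + j + 1) * (s + j + 1)
          = (a + 1).choose (s + j) * (a + 1 - (s + j)) :=
        Nat.choose_succ_right_eq (a + 1) (s + j)
      set d := a - (s + j) with hd
      have hd1 : a + 1 - (s + j) = d + 1 := by omega
      have hdle : d ≤ a := by omega
      rw [hd1] at h2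
      calc a.choose (s + (j+1)) * (a + 1) ^ (j+1) * (a + 1).choose s * (s + j + 1)
          = (a.choose (s + j + 1) * (s + j + 1)) * ((a + 1) ^ (j+1) * (a + 1).choose s) := by
            ring_nf
        _ = a.choose (s + j) * d * ((a + 1) ^ (j+1) * (a + 1).choose s) := by rw [h1]
        _ = (a.choose (s + j) * (a + 1) ^ j * (a + 1).choose s) * (d * (a + 1)) := by ring
        _ ≤ ((a + 1).choose (s + j) * a ^ j * a.choose s) * (d * (a + 1)) :=
            Nat.mul_le_mul_right _ ih
        _ ≤ ((a + 1).choose (s + j) * a ^ j * a.choose s) * ((d + 1) * a) := by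
            apply Nat.mul_le_mul_left
            nlinarith
        _ = ((a + 1).choose (s + j) * (d + 1)) * (a ^ (j+1) * a.choose s) := by ring
        _ = ((a + 1).choose (s + j + 1) * (s + j + 1)) * (a ^ (j+1) * a.choose s) := by rw [h2]
        _ = (a + 1).choose (s + (j+1)) * a ^ (j+1) * a.choose s * (s + j + 1) := by ring_nf
    · have hz : a.choose (s + (j + 1)) = 0 := Nat.choose_eq_zero_of_lt (by omega)
      simp [hz]

lemma part1_nat (m k n τ : ℕ) (hτ : τ ≤ m) (hmk : m ≤ k) (hkn : k ≤ n) :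
    (n - m).choose (k - τ) * (n + 1 - m) ^ (m - τ) * (n + 1 - m).choose (k - m)
      ≤ (n + 1 - m).choose (k - τ) * (n - m) ^ (m - τ) * (n - m).choose (k - m) := by
  have e1 : n + 1 - m = (n - m) + 1 := by omega
  have e2 : k - τ = (k - m) + (m - τ) := by omega
  rw [e1, e2]
  exact key_nat (n - m) (k - m) (m - τ)

lemma coeff_mono (m k n τ : ℕ) (hτ : τ ≤ m) (hmk : m ≤ k) (hkn : k ≤ n) :
    ((n - m).choose (k - τ) : ℝ) / (((n - m : ℕ) : ℝ) ^ (m - τ) * ((n - m).choose (k - m) : ℝ))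
      ≤ ((n + 1 - m).choose (k - τ) : ℝ)
        / (((n + 1 - m : ℕ) : ℝ) ^ (m - τ) * ((n + 1 - m).choose (k - m) : ℝ)) := by
  have h1 : 0 < n + 1 - m := by omega
  have h2 : 0 < (n + 1 - m).choose (k - m) := Nat.choose_pos (by omega)
  have hD' : 0 < (((n + 1 - m : ℕ) : ℝ) ^ (m - τ) * ((n + 1 - m).choose (k - m) : ℝ)) := by
    apply mul_pos
    · exact pow_pos (by exact_mod_cast h1) _
    · exact_mod_cast h2
  by_cases hD : (((n - m : ℕ) : ℝ) ^ (m - τ) * ((n - m).choose (k - m) : ℝ)) = 0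
  · rw [hD, div_zero]
    positivity
  · have hDpos : 0 < (((n - m : ℕ) : ℝ) ^ (m - τ) * ((n - m).choose (k - m) : ℝ)) :=
      lt_of_le_of_ne (by positivity) (Ne.symm hD)
    rw [div_le_div_iff₀ hDpos hD']
    have hnat := part1_nat m k n τ hτ hmk hkn
    calc ((n - m).choose (k - τ) : ℝ)
          * (((n + 1 - m : ℕ) : ℝ) ^ (m - τ) * ((n + 1 - m).choose (k - m) : ℝ))
        = (((n - m).choose (k - τ) * (n + 1 - m) ^ (m - τ) * (n + 1 - m).choose (k - m) : ℕ) : ℝ) := by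
          push_cast; ring
      _ ≤ (((n + 1 - m).choose (k - τ) * (n - m) ^ (m - τ) * (n - m).choose (k - m) : ℕ) : ℝ) := by
          exact_mod_cast hnat
      _ = ((n + 1 - m).choose (k - τ) : ℝ)
          * (((n - m : ℕ) : ℝ) ^ (m - τ) * ((n - m).choose (k - m) : ℝ)) := by
          push_cast; ring

/-- `gval m n k` is the maximum over `y ∈ [mk/n, m]` of the bounding function
appearing in the analysis of the proportional sampling algorithm. -/
noncomputable def gval (m n k : ℕ) : ℝ :=
  sSup ((fun y : ℝ => ∑ τ ∈ Finset.range (m + 1),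
      (((n - m).choose (k - τ) : ℝ)
          / (((n - m : ℕ) : ℝ) ^ (m - τ) * ((n - m).choose (k - m) : ℝ)))
        * ((m.choose τ : ℝ) / (m : ℝ) ^ τ)
        * ((k : ℝ) - y) ^ (m - τ) * y ^ τ) ''
    Set.Icc ((m * k : ℝ) / (n : ℝ)) (m : ℝ))

lemma gval_mono (m k n : ℕ) (hmk : m ≤ k) (hkn : k ≤ n) :
    gval m n k ≤ gval m (n + 1) k := by
  unfold gval
  have hcast : (((n + 1 : ℕ)) : ℝ) = (n : ℝ) + 1 := by push_cast; ring
  rw [hcast]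
  have hlow : (m * k : ℝ) / (n : ℝ) ≤ (m : ℝ) := by
    rcases Nat.eq_zero_or_pos n with hn | hn
    · have hm : m = 0 := by omega
      subst hn hm
      simp
    · rw [div_le_iff₀ (by exact_mod_cast hn)]
      have : (m * k : ℕ) ≤ m * n := Nat.mul_le_mul_left m hkn
      exact_mod_cast this
  have hsub : (m * k : ℝ) / ((n : ℝ) + 1) ≤ (m * k : ℝ) / (n : ℝ) := by
    rcases Nat.eq_zero_or_pos n with hn | hn
    · have hm : m = 0 := by omega
      subst hn hm
      simp
    · apply div_le_div_of_nonneg_left (by positivity) (by exact_mod_cast hn)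
      linarith
  apply csSup_le ((Set.nonempty_Icc.mpr hlow).image _)
  rintro x ⟨y, hy, rfl⟩
  have hy0 : 0 ≤ y := le_trans (by positivity) hy.1
  have hyk : y ≤ (k : ℝ) := le_trans hy.2 (by exact_mod_cast hmk)
  have hbdd : BddAbove ((fun y : ℝ => ∑ τ ∈ Finset.range (m + 1),
      (((n + 1 - m).choose (k - τ) : ℝ)
          / (((n + 1 - m : ℕ) : ℝ) ^ (m - τ) * ((n + 1 - m).choose (k - m) : ℝ)))
        * ((m.choose τ : ℝ) / (m : ℝ) ^ τ)
        * ((k : ℝ) - y) ^ (m - τ) * y ^ τ) ''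
      Set.Icc ((m * k : ℝ) / ((n : ℝ) + 1)) (m : ℝ)) := by
    apply (isCompact_Icc.image _).bddAbove
    apply continuous_finset_sum
    intro i _
    exact ((continuous_const.mul ((continuous_const.sub continuous_id).pow _)).mul
      (continuous_id.pow _))
  have hy' : y ∈ Set.Icc ((m * k : ℝ) / ((n : ℝ) + 1)) (m : ℝ) := ⟨le_trans hsub hy.1, hy.2⟩
  have step : (∑ τ ∈ Finset.range (m + 1),
      (((n - m).choose (k - τ) : ℝ)
          / (((n - m : ℕ) : ℝ) ^ (m - τ) * ((n - m).choose (k - m) : ℝ)))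
        * ((m.choose τ : ℝ) / (m : ℝ) ^ τ)
        * ((k : ℝ) - y) ^ (m - τ) * y ^ τ)
      ≤ ∑ τ ∈ Finset.range (m + 1),
      (((n + 1 - m).choose (k - τ) : ℝ)
          / (((n + 1 - m : ℕ) : ℝ) ^ (m - τ) * ((n + 1 - m).choose (k - m) : ℝ)))
        * ((m.choose τ : ℝ) / (m : ℝ) ^ τ)
        * ((k : ℝ) - y) ^ (m - τ) * y ^ τ := by
    apply Finset.sum_le_sum
    intro i hi
    have hi' : i ≤ m := by simpa [Nat.lt_succ_iff] using hi
    have hc := coeff_mono m k n i hi' hmk hkn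
    have hq : (0:ℝ) ≤ (m.choose i : ℝ) / (m : ℝ) ^ i := by positivity
    have hP : (0:ℝ) ≤ ((k : ℝ) - y) ^ (m - i) := by
      apply pow_nonneg; linarith
    have hY : (0:ℝ) ≤ y ^ i := pow_nonneg hy0 _
    exact mul_le_mul_of_nonneg_right
      (mul_le_mul_of_nonneg_right (mul_le_mul_of_nonneg_right hc hq) hP) hY
  calc (fun y : ℝ => ∑ τ ∈ Finset.range (m + 1),
      (((n - m).choose (k - τ) : ℝ)
          / (((n - m : ℕ) : ℝ) ^ (m - τ) * ((n - m).choose (k - m) : ℝ)))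
        * ((m.choose τ : ℝ) / (m : ℝ) ^ τ)
        * ((k : ℝ) - y) ^ (m - τ) * y ^ τ) y
      ≤ (fun y : ℝ => ∑ τ ∈ Finset.range (m + 1),
      (((n + 1 - m).choose (k - τ) : ℝ)
          / (((n + 1 - m : ℕ) : ℝ) ^ (m - τ) * ((n + 1 - m).choose (k - m) : ℝ)))
        * ((m.choose τ : ℝ) / (m : ℝ) ^ τ)
        * ((k : ℝ) - y) ^ (m - τ) * y ^ τ) y := step
    _ ≤ _ := le_csSup hbdd ⟨y, hy', rfl⟩

/-- Cross-multiplied monotonicity inequality for the coefficients of the bounding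
function, and the consequent monotonicity of `g(m,n,k)` in `n`. -/
theorem stmt16 (m k n τ : ℕ) (hτ : τ ≤ m) (hmk : m ≤ k) (hkn : k ≤ n) :
    ((n - m).choose (k - τ) * (n + 1 - m) ^ (m - τ) * (n + 1 - m).choose (k - m)
      ≤ (n + 1 - m).choose (k - τ) * (n - m) ^ (m - τ) * (n - m).choose (k - m))
    ∧ gval m n k ≤ gval m (n + 1) k :=
  ⟨part1_nat m k n τ hτ hmk hkn, gval_mono m k n hmk hkn⟩
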